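/- Let x ∈ ℝ³ with planar part x_p = (x1,x2,0), and v ∈ ℝ³ with v_p = (v1,v2,0) ≠ 0. Suppose the forward linear trajectory x + t v first meets the cylinder {|y|_p = R} at a point X₀ with |x|_p < R. Then the cosine of the angle a between the outward normal X₀_p/R and the planar direction v̂_p satisfies cos a = √(1 − |x|_p²/R² + (x_p·v̂_p)²/R²) > 0. -/

import Mathlib

/-- planar norm of a vector in ℝ³ -/
noncomputable def normp (y : ℝ × ℝ × ℝ) : ℝ := Real.sqrt (y.1 ^ 2 + y.2.1 ^ 2)

/-- planar dot product of vectors in ℝ³ -/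
def dotp (y w : ℝ × ℝ × ℝ) : ℝ := y.1 * w.1 + y.2.1 * w.2.1

/-- if the forward linear trajectory `x + t v` first meets the cylinder
`{|y|_p = R}` at `X₀ = x + t v` with `|x|_p < R`, then the cosine of the incidence angle
`cos a = (X₀_p/R)·v̂_p` equals `√(1 − |x|_p²/R² + (x_p·v̂_p)²/R²) > 0`. -/
theorem stmt_1 (R : ℝ) (hR : 0 < R) (x v : ℝ × ℝ × ℝ)
    (hx : normp x < R) (hv : normp v ≠ 0) (t : ℝ) (ht : 0 ≤ t)
    (hhit : normp (x + t • v) = R)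
    (hfirst : ∀ τ : ℝ, 0 ≤ τ → τ < t → normp (x + τ • v) < R) :
    dotp (x + t • v) v / (R * normp v)
      = Real.sqrt (1 - normp x ^ 2 / R ^ 2 + (dotp x v / normp v) ^ 2 / R ^ 2) ∧
    0 < Real.sqrt (1 - normp x ^ 2 / R ^ 2 + (dotp x v / normp v) ^ 2 / R ^ 2) := by
  set A : ℝ := x.1 ^ 2 + x.2.1 ^ 2 with hAdef
  set B : ℝ := x.1 * v.1 + x.2.1 * v.2.1 with hBdef
  set C : ℝ := v.1 ^ 2 + v.2.1 ^ 2 with hCdef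
  have hA0 : 0 ≤ A := by positivity
  have hC0 : 0 ≤ C := by positivity
  -- C > 0
  have hC : 0 < C := by
    have hCne : C ≠ 0 := by
      intro h0
      exact hv (by rw [normp, show v.1 ^ 2 + v.2.1 ^ 2 = C from rfl, h0, Real.sqrt_zero])
    exact lt_of_le_of_ne hC0 (Ne.symm hCne)
  -- A < R^2
  have hA : A < R ^ 2 := by
    have : Real.sqrt A < R := hx
    nlinarith [Real.sq_sqrt hA0, Real.sqrt_nonneg A]
  -- hit equation
  have hE : A + 2 * t * B + t ^ 2 * C = R ^ 2 := by
    have h1 : normp (x + t • v) = Real.sqrt (A + 2 * t * B + t ^ 2 * C) := by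
      simp only [normp, Prod.fst_add, Prod.snd_add, Prod.smul_fst, Prod.smul_snd, smul_eq_mul]
      rw [hAdef, hBdef, hCdef]
      ring_nf
    rw [h1] at hhit
    have h2 : 0 ≤ A + 2 * t * B + t ^ 2 * C := by nlinarith [sq_nonneg (x.1 + t * v.1), sq_nonneg (x.2.1 + t * v.2.1)]
    nlinarith [Real.sq_sqrt h2]
  -- B + t C ≥ 0
  have hBt : 0 ≤ B + t * C := by
    nlinarith [sq_nonneg t, mul_nonneg ht hC0, mul_nonneg (mul_nonneg ht ht) hC0]
  have hnv : normp v = Real.sqrt C := rfl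
  have hnvsq : (Real.sqrt C) ^ 2 = C := Real.sq_sqrt hC0
  have hsC : 0 < Real.sqrt C := Real.sqrt_pos.mpr hC
  have hnx : normp x = Real.sqrt A := rfl
  have hnxsq : (Real.sqrt A) ^ 2 = A := Real.sq_sqrt hA0
  have hdot : dotp (x + t • v) v = B + t * C := by
    simp only [dotp, Prod.fst_add, Prod.snd_add, Prod.smul_fst, Prod.smul_snd, smul_eq_mul]
    ring
  have hdx : dotp x v = B := rfl
  clear_value A B C
  set q : ℝ := (B + t * C) / (R * Real.sqrt C) with hq
  have hq0 : 0 ≤ q := div_nonneg hBt (by positivity)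
  have harg : 1 - normp x ^ 2 / R ^ 2 + (dotp x v / normp v) ^ 2 / R ^ 2 = q ^ 2 := by
    rw [hnx, hnv, hdx, hq]
    rw [div_pow, div_pow, hnxsq, hnvsq, mul_pow, hnvsq]
    have hR2 : (R : ℝ) ^ 2 ≠ 0 := by positivity
    have hCne : C ≠ 0 := ne_of_gt hC
    have key : (B + t * C) ^ 2 = B ^ 2 + C * (R ^ 2 - A) := by linear_combination C * hE
    rw [key]
    field_simp
    ring
  have hBtpos : 0 < B + t * C := by
    rcases eq_or_lt_of_le hBt with h | h
    · exfalso
      have h2 : t * (B + t * C) = 0 := by rw [← h]; ring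
      nlinarith [hE, h2, mul_nonneg (mul_nonneg ht ht) hC0]
    · exact h
  have hqpos : 0 < q := div_pos hBtpos (by positivity)
  constructor
  · rw [hdot, harg, Real.sqrt_sq hq0, hnv]
  · rw [harg]
    exact Real.sqrt_pos.mpr (by positivity)
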